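/- For any partition α and |q| < 1, the principal specializations of Schur functions at conjugate partitions satisfy s_{ᵗα}(q^{−ρ}) = q^{κ(α)/2} s_α(q^{−ρ}), where q^{−ρ} = (q^{i−1/2})_{i≥1} and κ(α) = Σ_i α_i(α_i − 2i + 1). -/

import Mathlib

open scoped Classical

/-- The ring of symmetric functions, realized inside formal power series in x_0, x_1, …. -/
abbrev SymFn := MvPowerSeries ℕ ℚ

/-- Semistandard Young tableaux of skew shape f/g (0-indexed rows/columns, entries in ℕ). -/
def IsSSYT (f g : ℕ → ℕ) (T : ℕ × ℕ → ℕ) : Prop :=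
  (∀ i j, g i ≤ j → j + 1 < f i → T (i, j) ≤ T (i, j + 1)) ∧
  (∀ i j, g i ≤ j → j < f i → g (i + 1) ≤ j → j < f (i + 1) → T (i, j) < T (i + 1, j)) ∧
  (∀ i j, ¬(g i ≤ j ∧ j < f i) → T (i, j) = 0)

/-- The tableau T has content d : its entries realize the monomial x^d. -/
def HasContent (f g : ℕ → ℕ) (T : ℕ × ℕ → ℕ) (d : ℕ →₀ ℕ) : Prop :=
  ∀ v : ℕ, d v = Nat.card {c : ℕ × ℕ | g c.1 ≤ c.2 ∧ c.2 < f c.1 ∧ T c = v}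

/-- The skew Schur function s_{f/g} = Σ_T x^T (0 when g ⊄ f). -/
noncomputable def skewSchur (f g : ℕ → ℕ) : SymFn :=
  fun d => if ∀ i, g i ≤ f i
    then (Nat.card {T : ℕ × ℕ → ℕ // IsSSYT f g T ∧ HasContent f g T d} : ℚ) else 0

/-- The Schur function s_f. -/
noncomputable def schur (f : ℕ → ℕ) : SymFn := skewSchur f fun _ => 0

/-- The second Casimir κ(μ) = Σ μ_i (μ_i - 2i + 1) (0-indexed form). -/
noncomputable def kappaZ (f : ℕ → ℕ) : ℤ :=
  ∑ᶠ i : ℕ, (f i : ℤ) * ((f i : ℤ) - 2 * (i : ℤ) - 1)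

/-- The conjugate (transpose) partition, as a function. -/
noncomputable def conjF (f : ℕ → ℕ) : ℕ → ℕ := fun j => Nat.card {i : ℕ | j < f i}

/-- Evaluation of a symmetric function at complex values x_i (as a convergent sum). -/
noncomputable def evalS (F : SymFn) (x : ℕ → ℂ) : ℂ :=
  ∑' d : ℕ →₀ ℕ, (F d : ℂ) * ∏ i ∈ d.support, x i ^ d i

/-! ### Auxiliary material -/

section Aux

/-- Reverse plane partitions of shape g. -/
def IsRPP (g : ℕ → ℕ) (T : ℕ × ℕ → ℕ) : Prop :=
  (∀ i j, j + 1 < g i → T (i, j) ≤ T (i, j + 1)) ∧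
  (∀ i j, j < g i → j < g (i + 1) → T (i, j) ≤ T (i + 1, j)) ∧
  (∀ i j, ¬ j < g i → T (i, j) = 0)

/-- The finset of cells of the diagram of g, where s contains the support of g. -/
noncomputable def cellsF (g : ℕ → ℕ) (s : Finset ℕ) : Finset (ℕ × ℕ) :=
  s.biUnion fun i => {i} ×ˢ Finset.range (g i)

lemma mem_cellsF {g : ℕ → ℕ} {s : Finset ℕ} (h : Function.support g ⊆ ↑s) (c : ℕ × ℕ) :
    c ∈ cellsF g s ↔ c.2 < g c.1 := by
  simp only [cellsF, Finset.mem_biUnion, Finset.mem_product, Finset.mem_singleton,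
    Finset.mem_range]
  constructor
  · rintro ⟨i, _, h1, h2⟩; rw [h1]; exact h2
  · intro hc
    refine ⟨c.1, h ?_, rfl, hc⟩
    simp only [Function.mem_support]
    omega

lemma sum_cellsF {M : Type*} [AddCommMonoid M] (g : ℕ → ℕ) (s : Finset ℕ) (φ : ℕ × ℕ → M) :
    ∑ c ∈ cellsF g s, φ c = ∑ i ∈ s, ∑ j ∈ Finset.range (g i), φ (i, j) := by
  rw [cellsF, Finset.sum_biUnion]
  · refine Finset.sum_congr rfl fun i _ => ?_
    rw [Finset.sum_product]
    simp
  · intro a _ b _ hab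
    simp only [Finset.disjoint_left, Finset.mem_product, Finset.mem_singleton]
    rintro ⟨x, y⟩ ⟨h1, _⟩ ⟨h2, _⟩
    exact hab (h1 ▸ h2 ▸ rfl)

/-- The content of a tableau, as a finitely supported function. -/
noncomputable def contentOf (C : Finset (ℕ × ℕ)) (T : ℕ × ℕ → ℕ) : ℕ →₀ ℕ :=
  ∑ c ∈ C, Finsupp.single (T c) 1

lemma contentOf_apply (C : Finset (ℕ × ℕ)) (T : ℕ × ℕ → ℕ) (u : ℕ) :
    contentOf C T u = (C.filter fun c => T c = u).card := by
  classical
  rw [contentOf, Finset.sum_apply', Finset.card_filter]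
  refine Finset.sum_congr rfl fun c _ => ?_
  rw [Finsupp.single_apply]

lemma hasContent_iff {g : ℕ → ℕ} {s : Finset ℕ} (hs : Function.support g ⊆ ↑s)
    (T : ℕ × ℕ → ℕ) (d : ℕ →₀ ℕ) :
    HasContent g (fun _ => 0) T d ↔
      ∀ u, d u = ((cellsF g s).filter fun c => T c = u).card := by
  refine forall_congr' fun u => ?_
  have h1 : {c : ℕ × ℕ | (fun _ => 0) c.1 ≤ c.2 ∧ c.2 < g c.1 ∧ T c = u} =
      ↑((cellsF g s).filter fun c => T c = u) := by
    ext c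
    simp [mem_cellsF hs]
  rw [h1, Nat.card_coe_set_eq, Set.ncard_coe_finset]

lemma hasContent_contentOf {g : ℕ → ℕ} {s : Finset ℕ} (hs : Function.support g ⊆ ↑s)
    (T : ℕ × ℕ → ℕ) : HasContent g (fun _ => 0) T (contentOf (cellsF g s) T) := by
  rw [hasContent_iff hs]
  intro u
  exact contentOf_apply _ _ _

lemma hasContent_unique {g : ℕ → ℕ} {s : Finset ℕ} (hs : Function.support g ⊆ ↑s)
    {T : ℕ × ℕ → ℕ} {d : ℕ →₀ ℕ} (hT : HasContent g (fun _ => 0) T d) :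
    contentOf (cellsF g s) T = d := by
  rw [hasContent_iff hs] at hT
  ext u
  rw [contentOf_apply, hT u]

end Aux
section Aux2

lemma summable_pi_fin (w : ℕ → ℝ) (hw : ∀ m, 0 ≤ w m) (hsum : Summable w) :
    ∀ n : ℕ, Summable fun u : Fin n → ℕ => ∏ i, w (u i) := by
  intro n
  induction n with
  | zero => exact Summable.of_finite
  | succ n ih =>
    obtain ⟨G, hG⟩ : ∃ G : (Fin n → ℕ) → ℝ, G = fun u => ∏ i, w (u i) := ⟨_, rfl⟩
    rw [← hG] at ih
    have hw' : 0 ≤ w := fun m => hw m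
    have hGnn : 0 ≤ G := by
      rw [hG]; exact fun u => Finset.prod_nonneg fun i _ => hw _
    have h2 : Summable fun p : ℕ × (Fin n → ℕ) => w p.1 * G p.2 :=
      hsum.mul_of_nonneg ih hw' hGnn
    have hinj : Function.Injective
        (fun u : Fin (n + 1) → ℕ => ((u 0, fun i : Fin n => u i.succ) : ℕ × (Fin n → ℕ))) := by
      intro u u' h
      funext i
      cases i using Fin.cases with
      | zero => exact congrArg Prod.fst h
      | succ i => exact congrFun (congrArg Prod.snd h) i
    exact (h2.comp_injective hinj).congr fun u => by
      simp [hG, Function.comp, Fin.prod_univ_succ]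

lemma summable_pi_fintype {ι : Type*} [Fintype ι] (w : ℕ → ℝ) (hw : ∀ m, 0 ≤ w m)
    (hsum : Summable w) : Summable fun u : ι → ℕ => ∏ i, w (u i) := by
  classical
  obtain e := Fintype.equivFin ι
  have h := summable_pi_fin w hw hsum (Fintype.card ι)
  have hinj : Function.Injective
      (fun u : ι → ℕ => (u ∘ e.symm : Fin (Fintype.card ι) → ℕ)) := by
    intro u u' hval
    funext i
    have := congrFun hval (e i)
    simpa using this
  exact (h.comp_injective hinj).congr fun u => by
    simpa [Function.comp] using Equiv.prod_comp e.symm fun i => w (u i)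

lemma summable_ssyt (v : ℂ) (hv : ‖v‖ < 1) (g : ℕ → ℕ) (s : Finset ℕ)
    (hs : Function.support g ⊆ ↑s) :
    Summable fun T : {T : ℕ × ℕ → ℕ // IsSSYT g (fun _ => 0) T} =>
      (v : ℂ) ^ (∑ c ∈ cellsF g s, (2 * T.1 c + 1)) := by
  classical
  set a := ‖v‖ with ha
  have ha0 : 0 ≤ a := norm_nonneg v
  have hw : Summable fun m : ℕ => a ^ (2 * m + 1) := by
    have h2 : a ^ 2 < 1 := by nlinarith
    have := (summable_geometric_of_lt_one (by positivity) h2).mul_right a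
    refine this.congr fun m => ?_
    rw [← pow_mul, ← pow_succ]
  have hG : Summable fun u : ↥(cellsF g s) → ℕ => ∏ c, a ^ (2 * u c + 1) :=
    summable_pi_fintype (fun m => a ^ (2 * m + 1)) (fun m => by positivity) hw
  have hinj : Function.Injective
      (fun T : {T : ℕ × ℕ → ℕ // IsSSYT g (fun _ => 0) T} =>
        (fun c : ↥(cellsF g s) => T.1 c.1)) := by
    intro T T' h
    apply Subtype.ext
    funext c
    obtain ⟨i, j⟩ := c
    by_cases hcell : j < g i
    · have hm : ((i, j) : ℕ × ℕ) ∈ cellsF g s := (mem_cellsF hs _).2 hcell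
      exact congrFun h ⟨(i, j), hm⟩
    · rw [T.2.2.2 i j (fun hand => hcell hand.2), T'.2.2.2 i j (fun hand => hcell hand.2)]
  apply Summable.of_norm
  refine ((hG.comp_injective hinj).congr fun T => ?_)
  show (∏ c : ↥(cellsF g s), a ^ (2 * T.1 (↑c : ℕ × ℕ) + 1)) = _
  rw [Finset.prod_coe_sort (cellsF g s) (fun c => a ^ (2 * T.1 c + 1)),
    Finset.prod_pow_eq_pow_sum (cellsF g s) _ a, norm_pow]

end Aux2
section Aux3

set_option maxHeartbeats 1000000 in
lemma evalS_schur (v : ℂ) (hv : ‖v‖ < 1) (g : ℕ → ℕ) (s : Finset ℕ)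
    (hs : Function.support g ⊆ ↑s) :
    evalS (schur g) (fun i => v ^ (2 * i + 1)) =
      ∑' T : {T : ℕ × ℕ → ℕ // IsSSYT g (fun _ => 0) T},
        (v : ℂ) ^ (∑ c ∈ cellsF g s, (2 * T.1 c + 1)) := by
  classical
  have fibFin : ∀ d : ℕ →₀ ℕ,
      Finite {T : ℕ × ℕ → ℕ // IsSSYT g (fun _ => 0) T ∧ HasContent g (fun _ => 0) T d} := by
    intro d
    have hmem : ∀ (T : ℕ × ℕ → ℕ), HasContent g (fun _ => 0) T d →
        ∀ c ∈ cellsF g s, T c ∈ d.support := by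
      intro T hT c hc
      rw [hasContent_iff hs] at hT
      have h2 := hT (T c)
      have hpos : 0 < ((cellsF g s).filter fun c' => T c' = T c).card :=
        Finset.card_pos.2 ⟨c, Finset.mem_filter.2 ⟨hc, rfl⟩⟩
      rw [Finsupp.mem_support_iff]
      omega
    have hinj : Function.Injective (fun T : {T : ℕ × ℕ → ℕ //
        IsSSYT g (fun _ => 0) T ∧ HasContent g (fun _ => 0) T d} =>
        (fun c : ↥(cellsF g s) => (⟨T.1 c.1, hmem T.1 T.2.2 c.1 c.2⟩ : ↥(d.support)))) := by
      intro T T' h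
      apply Subtype.ext
      funext c
      obtain ⟨i, j⟩ := c
      by_cases hcell : j < g i
      · have hm : ((i, j) : ℕ × ℕ) ∈ cellsF g s := (mem_cellsF hs _).2 hcell
        have h3 := congrFun h ⟨(i, j), hm⟩
        exact congrArg Subtype.val h3
      · rw [T.2.1.2.2 i j (fun hand => hcell hand.2), T'.2.1.2.2 i j (fun hand => hcell hand.2)]
    exact Finite.of_injective _ hinj
  let Φ : {T : ℕ × ℕ → ℕ // IsSSYT g (fun _ => 0) T} ≃
      Σ d : ℕ →₀ ℕ, {T : ℕ × ℕ → ℕ // IsSSYT g (fun _ => 0) T ∧ HasContent g (fun _ => 0) T d} :=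
    { toFun := fun T => ⟨contentOf (cellsF g s) T.1, T.1, T.2, hasContent_contentOf hs T.1⟩
      invFun := fun p => ⟨p.2.1, p.2.2.1⟩
      left_inv := fun T => rfl
      right_inv := by
        rintro ⟨d, T, h1, h2⟩
        have hd := hasContent_unique hs h2
        subst hd
        rfl }
  have hweight : ∀ T : ℕ × ℕ → ℕ,
      (∏ i ∈ (contentOf (cellsF g s) T).support,
          (v ^ (2 * i + 1)) ^ (contentOf (cellsF g s) T i))
        = v ^ (∑ c ∈ cellsF g s, (2 * T c + 1)) := by
    intro T
    rw [Finset.prod_congr rfl fun i _ =>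
      (pow_mul v (2 * i + 1) (contentOf (cellsF g s) T i)).symm]
    rw [Finset.prod_pow_eq_pow_sum]
    congr 1
    have h1 : (∑ i ∈ (contentOf (cellsF g s) T).support,
        (2 * i + 1) * contentOf (cellsF g s) T i)
        = (contentOf (cellsF g s) T).sum fun i m => (2 * i + 1) * m := rfl
    rw [h1, contentOf, ← Finsupp.sum_finsetSum_index (fun i => by simp) (fun i x y => by ring)]
    refine Finset.sum_congr rfl fun c _ => ?_
    rw [Finsupp.sum_single_index (by simp)]
    ring
  have hper : ∀ d : ℕ →₀ ℕ, ((schur g d : ℚ) : ℂ) * ∏ i ∈ d.support, (v ^ (2 * i + 1)) ^ d i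
      = ∑' t : {T : ℕ × ℕ → ℕ // IsSSYT g (fun _ => 0) T ∧ HasContent g (fun _ => 0) T d},
          ∏ i ∈ d.support, (v ^ (2 * i + 1)) ^ d i := by
    intro d
    have hfin := fibFin d
    letI := Fintype.ofFinite
      {T : ℕ × ℕ → ℕ // IsSSYT g (fun _ => 0) T ∧ HasContent g (fun _ => 0) T d}
    rw [tsum_fintype, Finset.sum_const, Finset.card_univ]
    have hcard : schur g d = (Nat.card {T : ℕ × ℕ → ℕ //
        IsSSYT g (fun _ => 0) T ∧ HasContent g (fun _ => 0) T d} : ℚ) := by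
      simp only [schur, skewSchur]
      rw [if_pos]
      intro i
      exact Nat.zero_le _
    rw [hcard, Nat.card_eq_fintype_card, nsmul_eq_mul]
    push_cast
    ring
  have hsum2 : Summable (fun p : Σ d : ℕ →₀ ℕ, {T : ℕ × ℕ → ℕ //
        IsSSYT g (fun _ => 0) T ∧ HasContent g (fun _ => 0) T d} =>
      ∏ i ∈ p.1.support, (v ^ (2 * i + 1)) ^ p.1 i) := by
    rw [← Equiv.summable_iff Φ]
    refine (summable_ssyt v hv g s hs).congr fun T => ?_
    exact (hweight T.1).symm
  calc evalS (schur g) (fun i => v ^ (2 * i + 1))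
      = ∑' d : ℕ →₀ ℕ, ((schur g d : ℚ) : ℂ) * ∏ i ∈ d.support, (v ^ (2 * i + 1)) ^ d i := rfl
    _ = ∑' d : ℕ →₀ ℕ,
          ∑' t : {T : ℕ × ℕ → ℕ // IsSSYT g (fun _ => 0) T ∧ HasContent g (fun _ => 0) T d},
          ∏ i ∈ d.support, (v ^ (2 * i + 1)) ^ d i := tsum_congr hper
    _ = ∑' p : Σ d : ℕ →₀ ℕ, {T : ℕ × ℕ → ℕ //
          IsSSYT g (fun _ => 0) T ∧ HasContent g (fun _ => 0) T d},
          ∏ i ∈ p.1.support, (v ^ (2 * i + 1)) ^ p.1 i := (hsum2.tsum_sigma).symm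
    _ = ∑' T : {T : ℕ × ℕ → ℕ // IsSSYT g (fun _ => 0) T},
          ∏ i ∈ (contentOf (cellsF g s) T.1).support,
            (v ^ (2 * i + 1)) ^ (contentOf (cellsF g s) T.1 i) :=
        (Equiv.tsum_eq Φ _).symm
    _ = ∑' T : {T : ℕ × ℕ → ℕ // IsSSYT g (fun _ => 0) T},
          (v : ℂ) ^ (∑ c ∈ cellsF g s, (2 * T.1 c + 1)) := tsum_congr fun T => hweight T.1

end Aux3
section Aux4

lemma ssyt_ge {g : ℕ → ℕ} (hg : Antitone g) {T : ℕ × ℕ → ℕ}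
    (hT : IsSSYT g (fun _ => 0) T) : ∀ i j, j < g i → i ≤ T (i, j) := by
  intro i
  induction i with
  | zero => intro j _; exact Nat.zero_le _
  | succ i ih =>
    intro j hj
    have hji : j < g i := lt_of_lt_of_le hj (hg (Nat.le_succ i))
    have h1 := hT.2.1 i j (Nat.zero_le _) hji (Nat.zero_le _) hj
    have h2 := ih j hji
    omega

noncomputable def toRPPfun (g : ℕ → ℕ) (T : ℕ × ℕ → ℕ) : ℕ × ℕ → ℕ :=
  fun c => if c.2 < g c.1 then T c - c.1 else 0

noncomputable def toSSYTfun (g : ℕ → ℕ) (U : ℕ × ℕ → ℕ) : ℕ × ℕ → ℕ :=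
  fun c => if c.2 < g c.1 then U c + c.1 else 0

lemma toRPPfun_apply (g : ℕ → ℕ) (T : ℕ × ℕ → ℕ) (i j : ℕ) :
    toRPPfun g T (i, j) = if j < g i then T (i, j) - i else 0 := rfl

lemma toSSYTfun_apply (g : ℕ → ℕ) (U : ℕ × ℕ → ℕ) (i j : ℕ) :
    toSSYTfun g U (i, j) = if j < g i then U (i, j) + i else 0 := rfl

lemma isRPP_toRPP {g : ℕ → ℕ} (hg : Antitone g) {T : ℕ × ℕ → ℕ}
    (hT : IsSSYT g (fun _ => 0) T) : IsRPP g (toRPPfun g T) := by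
  refine ⟨?_, ?_, ?_⟩
  · intro i j hj
    have hj' : j < g i := by omega
    rw [toRPPfun_apply, toRPPfun_apply, if_pos hj', if_pos hj]
    have := hT.1 i j (Nat.zero_le _) hj
    omega
  · intro i j hj1 hj2
    rw [toRPPfun_apply, toRPPfun_apply, if_pos hj1, if_pos hj2]
    have h1 := hT.2.1 i j (Nat.zero_le _) hj1 (Nat.zero_le _) hj2
    have h2 := ssyt_ge hg hT i j hj1
    omega
  · intro i j hj
    rw [toRPPfun_apply, if_neg hj]

lemma isSSYT_toSSYT {g : ℕ → ℕ} {U : ℕ × ℕ → ℕ} (hU : IsRPP g U) :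
    IsSSYT g (fun _ => 0) (toSSYTfun g U) := by
  refine ⟨?_, ?_, ?_⟩
  · intro i j _ hj
    have hj' : j < g i := by omega
    rw [toSSYTfun_apply, toSSYTfun_apply, if_pos hj', if_pos hj]
    have := hU.1 i j hj
    omega
  · intro i j _ hj1 _ hj2
    rw [toSSYTfun_apply, toSSYTfun_apply, if_pos hj1, if_pos hj2]
    have := hU.2.1 i j hj1 hj2
    omega
  · intro i j hj
    have h' : ¬ j < g i := fun h => hj ⟨Nat.zero_le _, h⟩
    rw [toSSYTfun_apply, if_neg h']

noncomputable def equivSSYTRPP {g : ℕ → ℕ} (hg : Antitone g) :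
    {T : ℕ × ℕ → ℕ // IsSSYT g (fun _ => 0) T} ≃ {U : ℕ × ℕ → ℕ // IsRPP g U} where
  toFun T := ⟨toRPPfun g T.1, isRPP_toRPP hg T.2⟩
  invFun U := ⟨toSSYTfun g U.1, isSSYT_toSSYT U.2⟩
  left_inv T := by
    apply Subtype.ext
    funext c
    obtain ⟨i, j⟩ := c
    show toSSYTfun g (toRPPfun g T.1) (i, j) = T.1 (i, j)
    rw [toSSYTfun_apply, toRPPfun_apply]
    by_cases hc : j < g i
    · rw [if_pos hc, if_pos hc]
      have := ssyt_ge hg T.2 i j hc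
      omega
    · rw [if_neg hc]
      exact (T.2.2.2 i j (fun hand => hc hand.2)).symm
  right_inv U := by
    apply Subtype.ext
    funext c
    obtain ⟨i, j⟩ := c
    show toRPPfun g (toSSYTfun g U.1) (i, j) = U.1 (i, j)
    rw [toRPPfun_apply, toSSYTfun_apply]
    by_cases hc : j < g i
    · rw [if_pos hc, if_pos hc]
      omega
    · rw [if_neg hc]
      exact (U.2.2.2 i j hc).symm

lemma sum_toRPP {g : ℕ → ℕ} (hg : Antitone g) {s : Finset ℕ}
    (hs : Function.support g ⊆ ↑s) {T : ℕ × ℕ → ℕ} (hT : IsSSYT g (fun _ => 0) T) :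
    ∑ c ∈ cellsF g s, T c = (∑ c ∈ cellsF g s, toRPPfun g T c) + ∑ c ∈ cellsF g s, c.1 := by
  rw [← Finset.sum_add_distrib]
  refine Finset.sum_congr rfl fun c hc => ?_
  obtain ⟨i, j⟩ := c
  have hcell : j < g i := (mem_cellsF hs _).1 hc
  rw [toRPPfun_apply, if_pos hcell]
  have := ssyt_ge hg hT i j hcell
  omega

noncomputable def transposeFun (U : ℕ × ℕ → ℕ) : ℕ × ℕ → ℕ := fun c => U (c.2, c.1)

lemma isRPP_transpose {g g' : ℕ → ℕ} (hg : Antitone g)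
    (hrel : ∀ i j, j < g' i ↔ i < g j) {U : ℕ × ℕ → ℕ} (hU : IsRPP g U) :
    IsRPP g' (transposeFun U) := by
  refine ⟨?_, ?_, ?_⟩
  · intro i j hj
    have h1 : i < g (j + 1) := (hrel i (j + 1)).1 hj
    have h0 : i < g j := lt_of_lt_of_le h1 (hg (Nat.le_succ j))
    exact hU.2.1 j i h0 h1
  · intro i j hj1 hj2
    have h1 : i + 1 < g j := (hrel (i + 1) j).1 hj2
    exact hU.1 j i h1
  · intro i j hj
    exact hU.2.2 j i fun h => hj ((hrel i j).2 h)

noncomputable def equivRPPtranspose {g g' : ℕ → ℕ} (hg : Antitone g) (hg' : Antitone g')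
    (hrel : ∀ i j, j < g' i ↔ i < g j) :
    {U : ℕ × ℕ → ℕ // IsRPP g U} ≃ {W : ℕ × ℕ → ℕ // IsRPP g' W} where
  toFun U := ⟨transposeFun U.1, isRPP_transpose hg hrel U.2⟩
  invFun W := ⟨transposeFun W.1, isRPP_transpose hg' (fun i j => (hrel j i).symm) W.2⟩
  left_inv U := by apply Subtype.ext; funext c; rfl
  right_inv W := by apply Subtype.ext; funext c; rfl

lemma sum_cells_swap {M : Type*} [AddCommMonoid M] {g g' : ℕ → ℕ} {s s' : Finset ℕ}
    (hs : Function.support g ⊆ ↑s) (hs' : Function.support g' ⊆ ↑s')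
    (hrel : ∀ i j, j < g' i ↔ i < g j) (φ : ℕ × ℕ → M) :
    ∑ c ∈ cellsF g' s', φ c = ∑ c ∈ cellsF g s, φ (c.2, c.1) := by
  refine Finset.sum_nbij' (i := fun c : ℕ × ℕ => (c.2, c.1)) (j := fun c : ℕ × ℕ => (c.2, c.1))
    ?_ ?_ ?_ ?_ ?_
  · intro c hc
    rw [mem_cellsF hs'] at hc
    rw [mem_cellsF hs]
    exact (hrel c.1 c.2).1 hc
  · intro c hc
    rw [mem_cellsF hs] at hc
    rw [mem_cellsF hs']
    exact (hrel c.2 c.1).2 hc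
  · intro c _; rfl
  · intro c _; rfl
  · intro c _; rfl

end Aux4
section Aux5

lemma conj_rel {f : ℕ → ℕ} (hf : Antitone f) (hfin : (Function.support f).Finite) :
    ∀ i j, j < conjF f i ↔ i < f j := by
  intro i j
  have hSfin : {k : ℕ | i < f k}.Finite := hfin.subset (fun k hk => by
    simp only [Set.mem_setOf_eq] at hk
    simp only [Function.mem_support]
    omega)
  have hcard : conjF f i = {k : ℕ | i < f k}.ncard := Nat.card_coe_set_eq _
  constructor
  · intro hj
    by_contra hnot
    push_neg at hnot
    have hsub : {k : ℕ | i < f k} ⊆ ↑(Finset.range j) := by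
      intro k hk
      simp only [Set.mem_setOf_eq] at hk
      simp only [Finset.coe_range, Set.mem_Iio]
      by_contra hk2
      push_neg at hk2
      have := hf hk2
      omega
    have h2 : {k : ℕ | i < f k}.ncard ≤ (↑(Finset.range j) : Set ℕ).ncard :=
      Set.ncard_le_ncard hsub (Finset.range j).finite_toSet
    rw [Set.ncard_coe_finset, Finset.card_range] at h2
    omega
  · intro hj
    have hsub : ↑(Finset.range (j + 1)) ⊆ {k : ℕ | i < f k} := by
      intro k hk
      simp only [Finset.coe_range, Set.mem_Iio] at hk
      have : f j ≤ f k := hf (by omega)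
      simp only [Set.mem_setOf_eq]
      omega
    have h2 : (↑(Finset.range (j + 1)) : Set ℕ).ncard ≤ {k : ℕ | i < f k}.ncard :=
      Set.ncard_le_ncard hsub hSfin
    rw [Set.ncard_coe_finset, Finset.card_range] at h2
    omega

lemma conjF_antitone {f : ℕ → ℕ} (hf : Antitone f) (hfin : (Function.support f).Finite) :
    Antitone (conjF f) := by
  intro a b hab
  by_contra h
  push_neg at h
  have h1 : b < f (conjF f a) := (conj_rel hf hfin b (conjF f a)).1 h
  have h2 : a < f (conjF f a) := by omega
  have h3 : conjF f a < conjF f a := (conj_rel hf hfin a (conjF f a)).2 h2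
  omega

lemma gauss_int (k : ℕ) : 2 * (∑ j ∈ Finset.range k, (j : ℤ)) = (k : ℤ) * ((k : ℤ) - 1) := by
  induction k with
  | zero => simp
  | succ k ih =>
    rw [Finset.sum_range_succ]
    push_cast
    ring_nf
    ring_nf at ih
    linarith

end Aux5

theorem schur_conj_principal (v q : ℂ) (hv : v ^ 2 = q)
    (h0 : 0 < ‖q‖) (h1 : ‖q‖ < 1)
    (f : ℕ → ℕ) (hf : Antitone f) (hfin : (Function.support f).Finite) :
    evalS (schur (conjF f)) (fun i => v ^ (2 * i + 1)) =
      v ^ kappaZ f * evalS (schur f) (fun i => v ^ (2 * i + 1)) := by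
  classical
  have hq0 : q ≠ 0 := fun h => by simp [h] at h0
  have hv0 : v ≠ 0 := by
    intro h
    rw [h] at hv
    apply hq0
    rw [← hv]
    ring
  have habs : ‖v‖ ^ 2 = ‖q‖ := by rw [← hv, norm_pow]
  have hv1 : ‖v‖ < 1 := by nlinarith [norm_nonneg v]
  have hrel := conj_rel hf hfin
  have hanti' := conjF_antitone hf hfin
  have hs : Function.support f ⊆ ↑(hfin.toFinset) := fun x hx => by
    simp only [Finset.coe_sort_coe, Set.Finite.coe_toFinset]; exact hx
  have hs' : Function.support (conjF f) ⊆ ↑(Finset.range (f 0)) := by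
    intro j hj
    simp only [Function.mem_support] at hj
    have h2 : 0 < conjF f j := Nat.pos_of_ne_zero hj
    have h3 : j < f 0 := (hrel j 0).1 h2
    simp only [Finset.coe_range, Set.mem_Iio]
    exact h3
  -- the generic SSYT → RPP reduction
  have key : ∀ (g : ℕ → ℕ) (sg : Finset ℕ), Antitone g → Function.support g ⊆ ↑sg →
      (∑' T : {T : ℕ × ℕ → ℕ // IsSSYT g (fun _ => 0) T},
          (v : ℂ) ^ (∑ c ∈ cellsF g sg, (2 * T.1 c + 1)))
        = v ^ (2 * ∑ c ∈ cellsF g sg, c.1) *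
          ∑' U : {U : ℕ × ℕ → ℕ // IsRPP g U},
            (v : ℂ) ^ (2 * (∑ c ∈ cellsF g sg, U.1 c) + (cellsF g sg).card) := by
    intro g sg hg hsg
    rw [← Equiv.tsum_eq (equivSSYTRPP hg).symm
      (fun T : {T : ℕ × ℕ → ℕ // IsSSYT g (fun _ => 0) T} =>
        (v : ℂ) ^ (∑ c ∈ cellsF g sg, (2 * T.1 c + 1)))]
    rw [← tsum_mul_left]
    refine tsum_congr fun U => ?_
    have hcoe : (((equivSSYTRPP hg).symm U) : {T : ℕ × ℕ → ℕ // IsSSYT g (fun _ => 0) T}).1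
        = toSSYTfun g U.1 := rfl
    rw [hcoe]
    have hstep : ∀ c ∈ cellsF g sg, 2 * toSSYTfun g U.1 c + 1 = 2 * c.1 + (2 * U.1 c + 1) := by
      intro c hc
      obtain ⟨i, j⟩ := c
      have hcell : j < g i := (mem_cellsF hsg _).1 hc
      rw [toSSYTfun_apply, if_pos hcell]
      ring
    rw [Finset.sum_congr rfl hstep, Finset.sum_add_distrib, Finset.sum_add_distrib,
      ← Finset.mul_sum, ← Finset.mul_sum, Finset.sum_const, smul_eq_mul, mul_one, pow_add]
  rw [evalS_schur v hv1 (conjF f) (Finset.range (f 0)) hs',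
    evalS_schur v hv1 f hfin.toFinset hs,
    key (conjF f) (Finset.range (f 0)) hanti' hs',
    key f hfin.toFinset hf hs]
  -- transpose the RPP sum
  have hTr : (∑' U' : {W : ℕ × ℕ → ℕ // IsRPP (conjF f) W},
        (v : ℂ) ^ (2 * (∑ c ∈ cellsF (conjF f) (Finset.range (f 0)), U'.1 c)
          + (cellsF (conjF f) (Finset.range (f 0))).card))
      = ∑' U : {U : ℕ × ℕ → ℕ // IsRPP f U},
        (v : ℂ) ^ (2 * (∑ c ∈ cellsF f hfin.toFinset, U.1 c)
          + (cellsF f hfin.toFinset).card) := by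
    rw [← Equiv.tsum_eq (equivRPPtranspose hf hanti' hrel)
      (fun W : {W : ℕ × ℕ → ℕ // IsRPP (conjF f) W} =>
        (v : ℂ) ^ (2 * (∑ c ∈ cellsF (conjF f) (Finset.range (f 0)), W.1 c)
          + (cellsF (conjF f) (Finset.range (f 0))).card))]
    refine tsum_congr fun U => ?_
    have hcoe : ((equivRPPtranspose hf hanti' hrel U) :
        {W : ℕ × ℕ → ℕ // IsRPP (conjF f) W}).1 = transposeFun U.1 := rfl
    rw [hcoe]
    have h1 : ∑ c ∈ cellsF (conjF f) (Finset.range (f 0)), transposeFun U.1 c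
        = ∑ c ∈ cellsF f hfin.toFinset, U.1 c := by
      rw [sum_cells_swap hs hs' hrel (transposeFun U.1)]
      exact Finset.sum_congr rfl fun c _ => rfl
    have h2 : (cellsF (conjF f) (Finset.range (f 0))).card = (cellsF f hfin.toFinset).card := by
      have h3 := sum_cells_swap (M := ℕ) hs hs' hrel (fun _ => 1)
      simpa using h3
    rw [h1, h2]
  rw [hTr]
  -- the scalar identity
  have hm' : (∑ c ∈ cellsF (conjF f) (Finset.range (f 0)), c.1)
      = ∑ c ∈ cellsF f hfin.toFinset, c.2 := by
    rw [sum_cells_swap hs hs' hrel (fun c => c.1)]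
  have hkappa : kappaZ f + 2 * ((∑ c ∈ cellsF f hfin.toFinset, c.1 : ℕ) : ℤ)
      = 2 * ((∑ c ∈ cellsF (conjF f) (Finset.range (f 0)), c.1 : ℕ) : ℤ) := by
    have h1 : kappaZ f = ∑ i ∈ hfin.toFinset, (f i : ℤ) * ((f i : ℤ) - 2 * i - 1) := by
      rw [kappaZ]
      apply finsum_eq_finset_sum_of_support_subset
      intro i hi
      simp only [Function.mem_support] at hi
      have : f i ≠ 0 := by
        intro h
        apply hi
        rw [h]
        push_cast
        ring
      exact hfin.mem_toFinset.2 this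
    rw [hm', h1, sum_cellsF f hfin.toFinset (fun c => c.1),
      sum_cellsF f hfin.toFinset (fun c => c.2)]
    push_cast
    rw [Finset.mul_sum, Finset.mul_sum, ← Finset.sum_add_distrib]
    refine Finset.sum_congr rfl fun i _ => ?_
    have hg1 : ∑ j ∈ Finset.range (f i), (i : ℤ) = (f i : ℤ) * i := by
      rw [Finset.sum_const, Finset.card_range, nsmul_eq_mul]
    have hg2 := gauss_int (f i)
    rw [hg1]
    linarith [hg2]
  have hscal : (v : ℂ) ^ (2 * (∑ c ∈ cellsF (conjF f) (Finset.range (f 0)), c.1))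
      = v ^ kappaZ f * v ^ (2 * (∑ c ∈ cellsF f hfin.toFinset, c.1)) := by
    have h2 : ((2 * (∑ c ∈ cellsF (conjF f) (Finset.range (f 0)), c.1) : ℕ) : ℤ)
        = kappaZ f + ((2 * (∑ c ∈ cellsF f hfin.toFinset, c.1) : ℕ) : ℤ) := by
      push_cast
      push_cast at hkappa
      linarith
    calc (v : ℂ) ^ (2 * (∑ c ∈ cellsF (conjF f) (Finset.range (f 0)), c.1))
        = v ^ (((2 * (∑ c ∈ cellsF (conjF f) (Finset.range (f 0)), c.1) : ℕ)) : ℤ) :=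
          (zpow_natCast v _).symm
      _ = v ^ (kappaZ f + ((2 * (∑ c ∈ cellsF f hfin.toFinset, c.1) : ℕ) : ℤ)) := by rw [h2]
      _ = v ^ kappaZ f * v ^ (((2 * (∑ c ∈ cellsF f hfin.toFinset, c.1) : ℕ)) : ℤ) :=
          zpow_add₀ hv0 _ _
      _ = v ^ kappaZ f * v ^ (2 * (∑ c ∈ cellsF f hfin.toFinset, c.1)) := by
          rw [zpow_natCast]
  rw [hscal]
  ring
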